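/- Let μ and μ' be mutually absolutely continuous probability measures on K with dμ/dμ' ≤ β and dμ'/dμ ≤ β almost everywhere for some β ≥ 1. Let P be a Markov kernel on K, reversible with respect to μ', such that for some Δ ∈ (0,1) and every f ∈ L²(μ') with ∫ f dμ' = 0 one has ‖Pf‖_{L²(μ')} ≤ (1 − Δ)·‖f‖_{L²(μ')}. Let σ be a probability measure on K with σ ≪ μ and dσ/dμ ∈ L²(μ). Then for every natural number τ, σP^τ ≪ μ' and ‖d(σP^τ)/dμ' − 1‖_{L²(μ')} ≤ (1 − Δ)^τ · (β^{3/2}·‖dσ/dμ − 1‖_{L²(μ)} + √β·(β − 1)). -/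

import Mathlib

open MeasureTheory ProbabilityTheory
open scoped ENNReal

/-- The action of a Markov kernel on a (probability) measure: `σP (B) = ∫ P_x(B) dσ(x)`. -/
noncomputable def kernelApply {α : Type*} [MeasurableSpace α]
    (P : Kernel α α) (σ : Measure α) : Measure α :=
  σ.bind (fun x => P x)

/-- The `τ`-fold iterate `σ P^τ` of the action of a Markov kernel on a measure. -/
noncomputable def kernelIter {α : Type*} [MeasurableSpace α]
    (P : Kernel α α) (τ : ℕ) (σ : Measure α) : Measure α :=
  (kernelApply P)^[τ] σ

variable {α : Type*} [MeasurableSpace α]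

lemma sqrt_integral_sq_eq {γ : Measure α} {h : α → ℝ} (hh : MemLp h 2 γ) :
    Real.sqrt (∫ x, h x ^ 2 ∂γ) = (eLpNorm h 2 γ).toReal := by
  rw [hh.eLpNorm_eq_integral_rpow_norm two_ne_zero ENNReal.ofNat_ne_top]
  have h2 : (2 : ℝ≥0∞).toReal = 2 := by norm_num
  rw [h2]
  have he : ∀ a : α, ‖h a‖ ^ (2:ℝ) = h a ^ 2 := fun a => by
    rw [Real.rpow_two, Real.norm_eq_abs, sq_abs]
  simp_rw [he]
  rw [ENNReal.toReal_ofReal (Real.rpow_nonneg (integral_nonneg fun a => sq_nonneg _) _),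
    Real.sqrt_eq_rpow, one_div]

lemma swap_lintegral {μ' : Measure α} [SFinite μ'] {P : Kernel α α} [IsSFiniteKernel P]
    (hrev : (μ' ⊗ₘ P).map Prod.swap = μ' ⊗ₘ P)
    {G : α × α → ℝ≥0∞} (hG : Measurable G) :
    ∫⁻ p, G p ∂(μ' ⊗ₘ P) = ∫⁻ p, G p.swap ∂(μ' ⊗ₘ P) := by
  conv_lhs => rw [← hrev]
  rw [lintegral_map hG measurable_swap]

lemma bind_withDensity {μ' : Measure α} [IsProbabilityMeasure μ'] {P : Kernel α α}
    [IsMarkovKernel P]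
    (hrev : (μ' ⊗ₘ P).map Prod.swap = μ' ⊗ₘ P)
    {F : α → ℝ≥0∞} (hF : Measurable F) :
    (μ'.withDensity F).bind (fun x => P x) =
      μ'.withDensity (fun y => ∫⁻ x, F x ∂(P y)) := by
  ext s hs
  rw [Measure.bind_apply hs (Kernel.measurable P).aemeasurable,
    lintegral_withDensity_eq_lintegral_mul _ hF (Kernel.measurable_coe P hs),
    withDensity_apply _ hs]
  have hind : Measurable (s.indicator (1 : α → ℝ≥0∞)) := measurable_one.indicator hs
  have hG : Measurable (fun p : α × α => F p.1 * s.indicator 1 p.2) :=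
    (hF.comp measurable_fst).mul (hind.comp measurable_snd)
  have h1 : ∫⁻ x, (F * fun x => (P x) s) x ∂μ' = ∫⁻ p, F p.1 * s.indicator 1 p.2 ∂(μ' ⊗ₘ P) := by
    rw [Measure.lintegral_compProd hG]
    refine lintegral_congr fun x => ?_
    simp only [Pi.mul_apply]
    rw [lintegral_const_mul _ hind, lintegral_indicator_one hs]
  rw [h1, swap_lintegral hrev hG]
  have hG2 : Measurable (fun p : α × α => F p.2 * s.indicator 1 p.1) :=
    (hF.comp measurable_snd).mul (hind.comp measurable_fst)
  have h2 : ∫⁻ p, F p.swap.1 * s.indicator 1 p.swap.2 ∂(μ' ⊗ₘ P)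
      = ∫⁻ a, ∫⁻ b, F b * s.indicator 1 a ∂(P a) ∂μ' := Measure.lintegral_compProd hG2
  rw [h2]
  have h3 : ∀ a, ∫⁻ b, F b * s.indicator 1 a ∂(P a)
      = s.indicator (fun y => ∫⁻ x, F x ∂(P y)) a := by
    intro a
    rw [lintegral_mul_const _ hF]
    by_cases h : a ∈ s <;> simp [h]
  simp_rw [h3]
  rw [lintegral_indicator hs]

lemma lintegral_kernel_invariant {μ' : Measure α} [IsProbabilityMeasure μ'] {P : Kernel α α}
    [IsMarkovKernel P] (hrev : (μ' ⊗ₘ P).map Prod.swap = μ' ⊗ₘ P)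
    {F : α → ℝ≥0∞} (hF : Measurable F) :
    ∫⁻ y, ∫⁻ x, F x ∂(P y) ∂μ' = ∫⁻ x, F x ∂μ' := by
  have h1 : ∫⁻ y, ∫⁻ x, F x ∂(P y) ∂μ' = ∫⁻ p : α × α, F p.2 ∂(μ' ⊗ₘ P) :=
    (Measure.lintegral_compProd (hF.comp measurable_snd)).symm
  rw [h1]
  have hsw := swap_lintegral hrev (G := fun p : α × α => F p.2) (hF.comp measurable_snd)
  rw [hsw]
  have h2 : ∫⁻ p : α × α, F p.swap.2 ∂(μ' ⊗ₘ P) = ∫⁻ a, ∫⁻ _b, F a ∂(P a) ∂μ' :=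
    Measure.lintegral_compProd (hF.comp measurable_fst)
  rw [h2]
  refine lintegral_congr fun a => ?_
  simp

lemma sq_lintegral_le_prob {ν : Measure α} [IsProbabilityMeasure ν] {F : α → ℝ≥0∞}
    (hF : AEMeasurable F ν) :
    (∫⁻ x, F x ∂ν) ^ (2:ℝ) ≤ ∫⁻ x, F x ^ (2:ℝ) ∂ν := by
  have h := ENNReal.lintegral_mul_le_Lp_mul_Lq ν Real.HolderConjugate.two_two
    hF aemeasurable_const (g := fun _ => (1 : ℝ≥0∞))
  simp only [Pi.mul_apply, mul_one, ENNReal.one_rpow, lintegral_const, measure_univ,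
    one_mul] at h
  calc (∫⁻ x, F x ∂ν) ^ (2:ℝ)
      ≤ ((∫⁻ x, F x ^ (2:ℝ) ∂ν) ^ (1/(2:ℝ))) ^ (2:ℝ) := by
        exact ENNReal.rpow_le_rpow h (by norm_num)
    _ = ∫⁻ x, F x ^ (2:ℝ) ∂ν := by
        rw [← ENNReal.rpow_mul]
        norm_num

lemma step_lemma {μ' : Measure α} [IsProbabilityMeasure μ'] {P : Kernel α α} [IsMarkovKernel P]
    (hrev : (μ' ⊗ₘ P).map Prod.swap = μ' ⊗ₘ P)
    {f : α → ℝ} (hfm : Measurable f) (hf0 : ∀ x, 0 ≤ f x) (hfL2 : MemLp f 2 μ')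
    (hmass : ∫⁻ x, ENNReal.ofReal (f x) ∂μ' = 1) :
    Measurable (fun y => ∫ x, f x ∂(P y)) ∧ (∀ x, 0 ≤ ∫ x, f x ∂(P x)) ∧
      (μ'.withDensity (fun x => ENNReal.ofReal (f x))).bind (fun x => P x)
        = μ'.withDensity (fun y => ENNReal.ofReal (∫ x, f x ∂(P y))) ∧
      (∫⁻ y, ENNReal.ofReal (∫ x, f x ∂(P y)) ∂μ' = 1) ∧
      MemLp (fun y => ∫ x, f x ∂(P y)) 2 μ' ∧
      (∀ᵐ y ∂μ', Integrable f (P y)) := by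
  set F : α → ℝ≥0∞ := fun x => ENNReal.ofReal (f x) with hFdef
  have hF : Measurable F := hfm.ennreal_ofReal
  set L : α → ℝ≥0∞ := fun y => ∫⁻ x, F x ∂(P y) with hLdef
  have hL : Measurable L := Measurable.lintegral_kernel hF
  have hLint : ∫⁻ y, L y ∂μ' = 1 := by
    rw [hLdef]; rw [lintegral_kernel_invariant hrev hF, hmass]
  have hLfin : ∀ᵐ y ∂μ', L y < ⊤ := ae_lt_top hL (by rw [hLint]; exact ENNReal.one_ne_top)
  have hnorm : ∀ x, (‖f x‖₊ : ℝ≥0∞) = F x := by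
    intro x
    rw [hFdef]
    exact Real.enorm_eq_ofReal (hf0 x)
  have haeInt : ∀ᵐ y ∂μ', Integrable f (P y) := by
    filter_upwards [hLfin] with y hy
    refine ⟨hfm.aestronglyMeasurable, ?_⟩
    rw [hasFiniteIntegral_iff_ofReal (Filter.Eventually.of_forall hf0)]
    exact hy
  have hae : ∀ᵐ y ∂μ', ENNReal.ofReal (∫ x, f x ∂(P y)) = L y := by
    filter_upwards [haeInt] with y hy
    rw [hLdef, ofReal_integral_eq_lintegral_ofReal hy (Filter.Eventually.of_forall hf0)]
  have hf'm : Measurable (fun y => ∫ x, f x ∂(P y)) := by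
    have := StronglyMeasurable.integral_kernel_prod_right (κ := P) (f := fun _ y => f y)
      ((hfm.comp measurable_snd).stronglyMeasurable)
    exact this.measurable
  have hf'0 : ∀ x, 0 ≤ ∫ y, f y ∂(P x) := fun x => integral_nonneg hf0
  have hbind : (μ'.withDensity F).bind (fun x => P x)
      = μ'.withDensity (fun y => ENNReal.ofReal (∫ x, f x ∂(P y))) := by
    rw [bind_withDensity hrev hF, ← hLdef]
    exact (withDensity_congr_ae hae).symm
  have hmass' : ∫⁻ y, ENNReal.ofReal (∫ x, f x ∂(P y)) ∂μ' = 1 := by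
    rw [lintegral_congr_ae hae, hLint]
  -- L² bound via Cauchy-Schwarz and invariance
  have hintbound : ∫⁻ y, (‖∫ x, f x ∂(P y)‖₊ : ℝ≥0∞) ^ (2:ℝ) ∂μ'
      ≤ ∫⁻ x, (‖f x‖₊ : ℝ≥0∞) ^ (2:ℝ) ∂μ' := by
    have h1 : ∀ᵐ y ∂μ', (‖∫ x, f x ∂(P y)‖₊ : ℝ≥0∞) ^ (2:ℝ) = L y ^ (2:ℝ) := by
      filter_upwards [hae] with y hy
      rw [← enorm_eq_nnnorm, Real.enorm_eq_ofReal (hf'0 y), hy]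
    rw [lintegral_congr_ae h1]
    have h2 : ∀ y, L y ^ (2:ℝ) ≤ ∫⁻ x, F x ^ (2:ℝ) ∂(P y) := fun y =>
      sq_lintegral_le_prob hF.aemeasurable
    calc ∫⁻ y, L y ^ (2:ℝ) ∂μ' ≤ ∫⁻ y, ∫⁻ x, F x ^ (2:ℝ) ∂(P y) ∂μ' := lintegral_mono h2
      _ = ∫⁻ x, F x ^ (2:ℝ) ∂μ' :=
          lintegral_kernel_invariant hrev (hF.pow_const _)
      _ = ∫⁻ x, (‖f x‖₊ : ℝ≥0∞) ^ (2:ℝ) ∂μ' := by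
          refine lintegral_congr fun x => ?_
          rw [hnorm]
  have hf'L2 : MemLp (fun y => ∫ x, f x ∂(P y)) 2 μ' := by
    refine ⟨hf'm.aestronglyMeasurable, ?_⟩
    rw [eLpNorm_eq_lintegral_rpow_enorm_toReal two_ne_zero ENNReal.ofNat_ne_top]
    have hfin : ∫⁻ x, (‖f x‖₊ : ℝ≥0∞) ^ (2:ℝ) ∂μ' < ⊤ := by
      have := lintegral_rpow_enorm_lt_top_of_eLpNorm_lt_top two_ne_zero ENNReal.ofNat_ne_top hfL2.2
      simpa [enorm_eq_nnnorm] using this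
    have : (2:ℝ≥0∞).toReal = 2 := by norm_num
    rw [this]
    refine ENNReal.rpow_lt_top_of_nonneg (by norm_num) ?_
    exact (lt_of_le_of_lt hintbound hfin).ne
  exact ⟨hf'm, hf'0, hbind, hmass', hf'L2, haeInt⟩

lemma base_case {μ μ' σ : Measure α} [IsProbabilityMeasure μ] [IsProbabilityMeasure μ']
    [IsProbabilityMeasure σ]
    (hacc : μ ≪ μ') (hacc' : μ' ≪ μ) {β : ℝ} (hβ : 1 ≤ β)
    (hbd : ∀ᵐ x ∂μ', (μ.rnDeriv μ' x).toReal ≤ β)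
    (hbd' : ∀ᵐ x ∂μ, (μ'.rnDeriv μ x).toReal ≤ β)
    (hσac : σ ≪ μ) (hσL2 : MemLp (fun x => (σ.rnDeriv μ x).toReal) 2 μ) :
    Measurable (fun x => (σ.rnDeriv μ' x).toReal) ∧
    (∀ x, 0 ≤ (σ.rnDeriv μ' x).toReal) ∧
    σ = μ'.withDensity (fun x => ENNReal.ofReal ((σ.rnDeriv μ' x).toReal)) ∧
    (∫⁻ x, ENNReal.ofReal ((σ.rnDeriv μ' x).toReal) ∂μ' = 1) ∧
    MemLp (fun x => (σ.rnDeriv μ' x).toReal) 2 μ' ∧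
    Real.sqrt (∫ x, ((σ.rnDeriv μ' x).toReal - 1) ^ 2 ∂μ') ≤
      β ^ ((3:ℝ)/2) * Real.sqrt (∫ x, ((σ.rnDeriv μ x).toReal - 1) ^ 2 ∂μ) +
        Real.sqrt β * (β - 1) := by
  have hσμ' : σ ≪ μ' := hσac.trans hacc
  set f₀ : α → ℝ := fun x => (σ.rnDeriv μ' x).toReal with hf₀def
  have hf₀m : Measurable f₀ := (Measure.measurable_rnDeriv σ μ').ennreal_toReal
  have hf₀0 : ∀ x, 0 ≤ f₀ x := fun x => ENNReal.toReal_nonneg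
  have h2 : (fun x => ENNReal.ofReal (f₀ x)) =ᵐ[μ'] σ.rnDeriv μ' := by
    filter_upwards [Measure.rnDeriv_lt_top σ μ'] with x hx
    exact ENNReal.ofReal_toReal hx.ne
  have hwd : σ = μ'.withDensity (fun x => ENNReal.ofReal (f₀ x)) := by
    rw [withDensity_congr_ae h2, Measure.withDensity_rnDeriv_eq σ μ' hσμ']
  have hmass : ∫⁻ x, ENNReal.ofReal (f₀ x) ∂μ' = 1 := by
    rw [lintegral_congr_ae h2, Measure.lintegral_rnDeriv hσμ', measure_univ]
  -- real-valued auxiliary functions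
  set s : α → ℝ := fun x => (σ.rnDeriv μ x).toReal with hsdef
  set r : α → ℝ := fun x => (μ.rnDeriv μ' x).toReal with hrdef
  have hsm : Measurable s := (Measure.measurable_rnDeriv σ μ).ennreal_toReal
  have hrm : Measurable r := (Measure.measurable_rnDeriv μ μ').ennreal_toReal
  -- a.e. (μ') facts
  have hmul : σ.rnDeriv μ' =ᵐ[μ'] σ.rnDeriv μ * μ.rnDeriv μ' :=
    (Measure.rnDeriv_mul_rnDeriv hσac).symm
  have hsfin' : ∀ᵐ x ∂μ', σ.rnDeriv μ x < ⊤ :=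
    (Measure.rnDeriv_lt_top σ μ).filter_mono hacc'.ae_le
  have hrfin : ∀ᵐ x ∂μ', μ.rnDeriv μ' x < ⊤ := Measure.rnDeriv_lt_top μ μ'
  have hone : μ.rnDeriv μ' * μ'.rnDeriv μ =ᵐ[μ'] 1 := by
    have h1 : μ.rnDeriv μ' * μ'.rnDeriv μ =ᵐ[μ] μ.rnDeriv μ :=
      Measure.rnDeriv_mul_rnDeriv hacc (κ := μ)
    have h2' : μ.rnDeriv μ =ᵐ[μ] 1 := Measure.rnDeriv_self μ
    exact ((h1.trans h2').filter_mono hacc'.ae_le)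
  have hbd'2 : ∀ᵐ x ∂μ', (μ'.rnDeriv μ x).toReal ≤ β := hbd'.filter_mono hacc'.ae_le
  have hr'fin : ∀ᵐ x ∂μ', μ'.rnDeriv μ x < ⊤ :=
    (Measure.rnDeriv_lt_top μ' μ).filter_mono hacc'.ae_le
  have hβ0 : (0:ℝ) < β := lt_of_lt_of_le one_pos hβ
  -- pointwise real bounds a.e. μ'
  have hrbounds : ∀ᵐ x ∂μ', |r x - 1| ≤ β - 1 := by
    filter_upwards [hbd, hone, hbd'2, hrfin, hr'fin] with x h4 h5 h6 h7 h8
    have ht : r x * (μ'.rnDeriv μ x).toReal = 1 := by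
      have := congrArg ENNReal.toReal h5
      rwa [Pi.mul_apply, ENNReal.toReal_mul, Pi.one_apply, ENNReal.toReal_one] at this
    set t := (μ'.rnDeriv μ x).toReal with htdef
    have ht0 : 0 < t := by
      by_contra hcon
      push_neg at hcon
      have htz : t = 0 := le_antisymm hcon ENNReal.toReal_nonneg
      rw [htz, mul_zero] at ht; norm_num at ht
    have hrl : 1 / β ≤ r x := by
      have hr : r x = 1 / t := by rw [eq_div_iff ht0.ne']; exact ht
      rw [hr]
      exact one_div_le_one_div_of_le ht0 h6
    rw [abs_le]
    constructor
    · have h2β : 2 - β ≤ 1 / β := by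
        rw [le_div_iff₀ hβ0]
        nlinarith [sq_nonneg (β - 1)]
      linarith
    · linarith [h4]
  have hdecomp : (fun x => f₀ x - 1) =ᵐ[μ']
      (fun x => (s x - 1) * r x) + fun x => r x - 1 := by
    filter_upwards [hmul, hsfin', hrfin] with x h1 h2 h3
    have : f₀ x = s x * r x := by
      rw [hf₀def]
      simp only [h1, Pi.mul_apply, ENNReal.toReal_mul]
      rfl
    simp only [Pi.add_apply, this]
    ring
  set aA : α → ℝ := fun x => (s x - 1) * r x with haAdef
  set aB : α → ℝ := fun x => r x - 1 with haBdef
  have haAm : Measurable aA := (hsm.sub measurable_const).mul hrm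
  have haBm : Measurable aB := hrm.sub measurable_const
  have heB : eLpNorm aB 2 μ' ≤ ENNReal.ofReal (β - 1) := by
    have hb : ∀ᵐ x ∂μ', ‖aB x‖ ≤ β - 1 := by
      filter_upwards [hrbounds] with x hx
      rwa [haBdef, Real.norm_eq_abs]
    have h := eLpNorm_le_of_ae_bound (p := 2) (μ := μ') hb
    simpa [measure_univ] using h
  have hμeq : μ'.withDensity (μ.rnDeriv μ') = μ := Measure.withDensity_rnDeriv_eq μ μ' hacc
  set H : α → ℝ≥0∞ := fun x => (‖s x - 1‖₊ : ℝ≥0∞) ^ (2:ℝ) with hHdef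
  have hHm : Measurable H := by
    apply Measurable.pow_const
    exact (hsm.sub measurable_const).nnnorm.coe_nnreal_ennreal
  have hρm : Measurable (μ.rnDeriv μ') := Measure.measurable_rnDeriv μ μ'
  have hIA1 : ∀ᵐ x ∂μ', (‖aA x‖₊ : ℝ≥0∞) ^ (2:ℝ)
      = (μ.rnDeriv μ') x * (H x * (μ.rnDeriv μ') x) := by
    filter_upwards [hrfin] with x hx
    have h1 : (‖aA x‖₊ : ℝ≥0∞) = (‖s x - 1‖₊ : ℝ≥0∞) * (‖r x‖₊ : ℝ≥0∞) := by
      rw [haAdef]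
      push_cast [nnnorm_mul]
      ring
    have h2 : (‖r x‖₊ : ℝ≥0∞) = (μ.rnDeriv μ') x := by
      rw [hrdef, ← enorm_eq_nnnorm, Real.enorm_eq_ofReal ENNReal.toReal_nonneg, ENNReal.ofReal_toReal hx.ne]
    rw [h1, h2, ENNReal.mul_rpow_of_nonneg _ _ (by norm_num : (0:ℝ) ≤ 2)]
    have h3 : (μ.rnDeriv μ') x ^ (2:ℝ) = (μ.rnDeriv μ') x * (μ.rnDeriv μ') x := by
      rw [show ((2:ℝ) = ((2:ℕ):ℝ)) by norm_num, ENNReal.rpow_natCast, sq]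
    rw [h3, hHdef]
    ring
  have hIA : ∫⁻ x, (‖aA x‖₊ : ℝ≥0∞) ^ (2:ℝ) ∂μ' ≤ ENNReal.ofReal β * ∫⁻ x, H x ∂μ := by
    rw [lintegral_congr_ae hIA1]
    have hstep : ∫⁻ x, (μ.rnDeriv μ') x * (H x * (μ.rnDeriv μ') x) ∂μ'
        = ∫⁻ x, H x * (μ.rnDeriv μ') x ∂μ :=
      lintegral_rnDeriv_mul hacc (hHm.mul hρm).aemeasurable
    rw [hstep]
    have hbdμ : ∀ᵐ x ∂μ, (μ.rnDeriv μ') x ≤ ENNReal.ofReal β := by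
      filter_upwards [hbd.filter_mono hacc.ae_le, hrfin.filter_mono hacc.ae_le] with x h1 h2
      rw [← ENNReal.ofReal_toReal h2.ne]
      exact ENNReal.ofReal_le_ofReal h1
    calc ∫⁻ x, H x * (μ.rnDeriv μ') x ∂μ ≤ ∫⁻ x, ENNReal.ofReal β * H x ∂μ := by
          refine lintegral_mono_ae ?_
          filter_upwards [hbdμ] with x hx
          rw [mul_comm (ENNReal.ofReal β) (H x)]
          exact mul_le_mul_right hx _
      _ = ENNReal.ofReal β * ∫⁻ x, H x ∂μ := lintegral_const_mul _ hHm
  have hsub2 : MemLp (fun x => s x - 1) 2 μ := hσL2.sub (memLp_const 1)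
  have hG2fin : ∫⁻ x, H x ∂μ < ⊤ := by
    have h := lintegral_rpow_enorm_lt_top_of_eLpNorm_lt_top two_ne_zero ENNReal.ofNat_ne_top
      hsub2.2
    simpa [hHdef, enorm_eq_nnnorm] using h
  have heLps : eLpNorm (fun x => s x - 1) 2 μ = (∫⁻ x, H x ∂μ) ^ (1/(2:ℝ)) := by
    rw [eLpNorm_eq_lintegral_rpow_enorm_toReal two_ne_zero ENNReal.ofNat_ne_top]
    norm_num [hHdef, enorm_eq_nnnorm]
  have heA : eLpNorm aA 2 μ'
      ≤ ENNReal.ofReal (Real.sqrt β) * eLpNorm (fun x => s x - 1) 2 μ := by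
    rw [eLpNorm_eq_lintegral_rpow_enorm_toReal two_ne_zero ENNReal.ofNat_ne_top, heLps]
    have ht2 : ((2:ℝ≥0∞)).toReal = (2:ℝ) := by norm_num
    rw [ht2]
    calc (∫⁻ x, (‖aA x‖₊ : ℝ≥0∞) ^ (2:ℝ) ∂μ') ^ (1/(2:ℝ))
        ≤ (ENNReal.ofReal β * ∫⁻ x, H x ∂μ) ^ (1/(2:ℝ)) :=
          ENNReal.rpow_le_rpow hIA (by norm_num)
      _ = (ENNReal.ofReal β) ^ (1/(2:ℝ)) * (∫⁻ x, H x ∂μ) ^ (1/(2:ℝ)) :=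
          ENNReal.mul_rpow_of_nonneg _ _ (by norm_num)
      _ = ENNReal.ofReal (Real.sqrt β) * (∫⁻ x, H x ∂μ) ^ (1/(2:ℝ)) := by
          rw [ENNReal.ofReal_rpow_of_nonneg hβ0.le (by norm_num : (0:ℝ) ≤ 1/2),
            Real.sqrt_eq_rpow]
  have hsum : eLpNorm (fun x => f₀ x - 1) 2 μ'
      ≤ ENNReal.ofReal (Real.sqrt β) * eLpNorm (fun x => s x - 1) 2 μ
        + ENNReal.ofReal (β - 1) := by
    rw [eLpNorm_congr_ae hdecomp]
    exact (eLpNorm_add_le haAm.aestronglyMeasurable haBm.aestronglyMeasurable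
      one_le_two).trans (add_le_add heA heB)
  have hrhs_fin : ENNReal.ofReal (Real.sqrt β) * eLpNorm (fun x => s x - 1) 2 μ
      + ENNReal.ofReal (β - 1) ≠ ⊤ := by
    refine (ENNReal.add_lt_top.mpr ⟨?_, ENNReal.ofReal_lt_top⟩).ne
    exact ENNReal.mul_lt_top ENNReal.ofReal_lt_top hsub2.2
  have hfin : eLpNorm (fun x => f₀ x - 1) 2 μ' < ⊤ :=
    lt_of_le_of_lt hsum (lt_top_iff_ne_top.mpr hrhs_fin)
  have hsubL2 : MemLp (fun x => f₀ x - 1) 2 μ' :=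
    ⟨(hf₀m.sub measurable_const).aestronglyMeasurable, hfin⟩
  have hf₀L2 : MemLp f₀ 2 μ' := by
    have h := hsubL2.add (memLp_const (1:ℝ))
    have he : (fun x => (f₀ x - 1)) + (fun _ => (1:ℝ)) = f₀ := by
      funext x; simp
    rwa [he] at h
  refine ⟨hf₀m, hf₀0, hwd, hmass, hf₀L2, ?_⟩
  rw [sqrt_integral_sq_eq hsubL2]
  have h1 : (eLpNorm (fun x => f₀ x - 1) 2 μ').toReal
      ≤ (ENNReal.ofReal (Real.sqrt β) * eLpNorm (fun x => s x - 1) 2 μ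
        + ENNReal.ofReal (β - 1)).toReal := ENNReal.toReal_mono hrhs_fin hsum
  rw [ENNReal.toReal_add (ENNReal.mul_lt_top ENNReal.ofReal_lt_top hsub2.2).ne
    ENNReal.ofReal_ne_top, ENNReal.toReal_mul,
    ENNReal.toReal_ofReal (Real.sqrt_nonneg β),
    ENNReal.toReal_ofReal (by linarith : (0:ℝ) ≤ β - 1),
    ← sqrt_integral_sq_eq hsub2] at h1
  refine h1.trans ?_
  have hX : 0 ≤ Real.sqrt (∫ x, (s x - 1) ^ 2 ∂μ) := Real.sqrt_nonneg _
  have h2 : Real.sqrt β ≤ β ^ ((3:ℝ)/2) := by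
    rw [Real.sqrt_eq_rpow]
    exact Real.rpow_le_rpow_of_exponent_le hβ (by norm_num)
  have h3 : (1:ℝ) ≤ Real.sqrt β := by
    rw [show (1:ℝ) = Real.sqrt 1 from Real.sqrt_one.symm]
    exact Real.sqrt_le_sqrt hβ
  have hb1 : 0 ≤ β - 1 := by linarith
  exact add_le_add (mul_le_mul_of_nonneg_right h2 hX) (le_mul_of_one_le_left hb1 h3)


/-- if `μ, μ'` are mutually absolutely continuous probability measures on `K`
with density ratios bounded by `β` in both directions, `P` is a Markov kernel reversible with
respect to `μ'` contracting mean-zero functions in `L²(μ')` by a factor `1 − Δ`, and `σ ≪ μ`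
has `dσ/dμ ∈ L²(μ)`, then for every `τ`, `σP^τ ≪ μ'` and
`‖d(σP^τ)/dμ' − 1‖_{L²(μ')} ≤ (1 − Δ)^τ·(β^(3/2)·‖dσ/dμ − 1‖_{L²(μ)} + √β·(β − 1))`. -/
theorem l2_error_after_kernel_steps
    {d : ℕ} (K : Set (EuclideanSpace ℝ (Fin d)))
    (hKcomp : IsCompact K) (hKconv : Convex ℝ K) (hKint : (interior K).Nonempty)
    (μ μ' σ : Measure (EuclideanSpace ℝ (Fin d)))
    [IsProbabilityMeasure μ] [IsProbabilityMeasure μ'] [IsProbabilityMeasure σ]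
    (hμK : μ Kᶜ = 0) (hμ'K : μ' Kᶜ = 0) (hσK : σ Kᶜ = 0)
    (hacc : μ ≪ μ') (hacc' : μ' ≪ μ)
    (β : ℝ) (hβ : 1 ≤ β)
    (hbd : ∀ᵐ x ∂μ', (μ.rnDeriv μ' x).toReal ≤ β)
    (hbd' : ∀ᵐ x ∂μ, (μ'.rnDeriv μ x).toReal ≤ β)
    (P : Kernel (EuclideanSpace ℝ (Fin d)) (EuclideanSpace ℝ (Fin d)))
    [IsMarkovKernel P]
    (hPsupp : ∀ x ∈ K, (P x) Kᶜ = 0)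
    (hrev : (μ' ⊗ₘ P).map Prod.swap = μ' ⊗ₘ P)
    (Δ : ℝ) (hΔ0 : 0 < Δ) (hΔ1 : Δ < 1)
    (hcontract : ∀ f : EuclideanSpace ℝ (Fin d) → ℝ, MemLp f 2 μ' →
      (∫ x, f x ∂μ') = 0 →
      Real.sqrt (∫ x, (∫ y, f y ∂(P x)) ^ 2 ∂μ') ≤
        (1 - Δ) * Real.sqrt (∫ x, (f x) ^ 2 ∂μ'))
    (hσac : σ ≪ μ)
    (hσL2 : MemLp (fun x => (σ.rnDeriv μ x).toReal) 2 μ)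
    (τ : ℕ) :
    kernelIter P τ σ ≪ μ' ∧
    Real.sqrt (∫ x, (((kernelIter P τ σ).rnDeriv μ' x).toReal - 1) ^ 2 ∂μ') ≤
      (1 - Δ) ^ τ *
        (β ^ ((3 : ℝ) / 2) * Real.sqrt (∫ x, ((σ.rnDeriv μ x).toReal - 1) ^ 2 ∂μ) +
          Real.sqrt β * (β - 1)) := by
  set C : ℝ := β ^ ((3:ℝ)/2) * Real.sqrt (∫ x, ((σ.rnDeriv μ x).toReal - 1) ^ 2 ∂μ)
    + Real.sqrt β * (β - 1) with hCdef
  have h1Δ : (0:ℝ) ≤ 1 - Δ := by linarith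
  have main : ∀ t : ℕ, ∃ f : EuclideanSpace ℝ (Fin d) → ℝ, Measurable f ∧ (∀ x, 0 ≤ f x) ∧
      kernelIter P t σ = μ'.withDensity (fun x => ENNReal.ofReal (f x)) ∧
      (∫⁻ x, ENNReal.ofReal (f x) ∂μ' = 1) ∧ MemLp f 2 μ' ∧
      Real.sqrt (∫ x, (f x - 1) ^ 2 ∂μ') ≤ (1 - Δ) ^ t * C := by
    intro t
    induction t with
    | zero =>
      obtain ⟨hm, h0, hwd, hmass, hL2, hbound⟩ := base_case hacc hacc' hβ hbd hbd' hσac hσL2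
      exact ⟨_, hm, h0, by simpa [kernelIter] using hwd, hmass, hL2, by simpa using hbound⟩
    | succ t ih =>
      obtain ⟨f, hm, h0, hwd, hmass, hL2, hbound⟩ := ih
      obtain ⟨hf'm, hf'0, hbind, hmass', hf'L2, haeInt⟩ := step_lemma hrev hm h0 hL2 hmass
      refine ⟨fun y => ∫ x, f x ∂(P y), hf'm, hf'0, ?_, hmass', hf'L2, ?_⟩
      · have hit : kernelIter P (t+1) σ = kernelApply P (kernelIter P t σ) := by
          rw [kernelIter, Function.iterate_succ_apply']
          rfl
        rw [hit, hwd]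
        exact hbind
      · have hfint : Integrable f μ' := hL2.integrable one_le_two
        have hfmean : ∫ x, f x ∂μ' = 1 := by
          rw [integral_eq_lintegral_of_nonneg_ae (Filter.Eventually.of_forall h0)
            hm.aestronglyMeasurable, hmass]
          simp
        have hg : MemLp (fun x => f x - 1) 2 μ' := hL2.sub (memLp_const 1)
        have hgmean : ∫ x, f x - 1 ∂μ' = 0 := by
          rw [integral_sub hfint (integrable_const 1), hfmean]
          simp
        have hc := hcontract (fun x => f x - 1) hg hgmean
        have heq : ∫ x, ((∫ y, f y ∂(P x)) - 1) ^ 2 ∂μ'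
            = ∫ x, (∫ y, (f y - 1) ∂(P x)) ^ 2 ∂μ' := by
          refine integral_congr_ae ?_
          filter_upwards [haeInt] with x hx
          rw [integral_sub hx (integrable_const 1), integral_const]
          simp
        rw [heq]
        calc Real.sqrt (∫ x, (∫ y, (f y - 1) ∂(P x)) ^ 2 ∂μ')
            ≤ (1 - Δ) * Real.sqrt (∫ x, (f x - 1) ^ 2 ∂μ') := hc
          _ ≤ (1 - Δ) * ((1 - Δ) ^ t * C) := mul_le_mul_of_nonneg_left hbound h1Δ
          _ = (1 - Δ) ^ (t+1) * C := by ring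
  obtain ⟨f, hm, h0, hwd, hmass, hL2, hbound⟩ := main τ
  have hac : kernelIter P τ σ ≪ μ' := by
    rw [hwd]
    exact withDensity_absolutelyContinuous _ _
  refine ⟨hac, ?_⟩
  have hrd : (kernelIter P τ σ).rnDeriv μ' =ᵐ[μ'] fun x => ENNReal.ofReal (f x) := by
    rw [hwd]
    exact Measure.rnDeriv_withDensity μ' hm.ennreal_ofReal
  have hint : ∫ x, (((kernelIter P τ σ).rnDeriv μ' x).toReal - 1) ^ 2 ∂μ'
      = ∫ x, (f x - 1) ^ 2 ∂μ' := by
    refine integral_congr_ae ?_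
    filter_upwards [hrd] with x hx
    rw [hx, ENNReal.toReal_ofReal (h0 x)]
  rw [hint]
  exact hbound
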